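/- Let p and q be probability density functions on ℝ with finite second moments. Then for every x̄ > 0, ‖p − q‖₁ ≥ (1/x̄)·|𝔼_p[x] − 𝔼_q[x]| − (2/x̄²)·max(𝔼_p[x²], 𝔼_q[x²]). -/
import Mathlib


open MeasureTheory

/-- Integrability of a density times the truncated identity. -/
lemma trunc_integrable (xb : ℝ) (r : ℝ → ℝ)
    (hri : Integrable r) (hrm : Integrable (fun x => r x * x)) :
    Integrable (fun x => r x * (if |x| ≤ xb then x else 0)) := by
  have hfm : Measurable fun x : ℝ => if |x| ≤ xb then x else 0 :=
    Measurable.ite (measurableSet_le measurable_abs measurable_const)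
      measurable_id measurable_const
  apply hrm.mono (hri.aestronglyMeasurable.mul hfm.aestronglyMeasurable)
  filter_upwards with x
  simp only [Pi.mul_apply, norm_mul, Real.norm_eq_abs]
  refine mul_le_mul_of_nonneg_left ?_ (abs_nonneg _)
  split_ifs with h
  · exact le_refl _
  · simpa using abs_nonneg x

/-- Tail bound: truncating the first moment changes it by at most the second
moment divided by the truncation level. -/
lemma tail_bound (xb : ℝ) (hxb : 0 < xb) (r : ℝ → ℝ) (hr0 : ∀ x, 0 ≤ r x)
    (hri : Integrable r) (hrm : Integrable (fun x => r x * x))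
    (hr2 : Integrable (fun x => r x * x ^ 2)) :
    |(∫ x, r x * x) - ∫ x, r x * (if |x| ≤ xb then x else 0)| ≤
      (∫ x, r x * x ^ 2) / xb := by
  have hrf := trunc_integrable xb r hri hrm
  rw [← integral_sub hrm hrf]
  have hbound : ∀ x, |r x * x - r x * (if |x| ≤ xb then x else 0)| ≤
      r x * x ^ 2 / xb := by
    intro x
    rw [← mul_sub, abs_mul, abs_of_nonneg (hr0 x)]
    split_ifs with h
    · simp only [sub_self, abs_zero, mul_zero]
      exact div_nonneg (mul_nonneg (hr0 x) (sq_nonneg x)) hxb.le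
    · push_neg at h
      rw [sub_zero, mul_div_assoc]
      refine mul_le_mul_of_nonneg_left ?_ (hr0 x)
      rw [le_div_iff₀ hxb]
      calc |x| * xb ≤ |x| * |x| := mul_le_mul_of_nonneg_left h.le (abs_nonneg x)
        _ = x ^ 2 := by rw [abs_mul_abs_self, sq]
  calc |∫ x, (r x * x - r x * (if |x| ≤ xb then x else 0))|
      ≤ ∫ x, |r x * x - r x * (if |x| ≤ xb then x else 0)| := by
        simpa using norm_integral_le_integral_norm
          (fun x => r x * x - r x * (if |x| ≤ xb then x else 0))
    _ ≤ ∫ x, r x * x ^ 2 / xb :=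
        integral_mono (hrm.sub hrf).abs (hr2.div_const xb) hbound
    _ = (∫ x, r x * x ^ 2) / xb := integral_div xb _

/-- Pre-optimization total-variation lower bound: for probability densities `p`, `q`
on ℝ with finite second moments and every `x̄ > 0`,
`‖p − q‖₁ ≥ (1/x̄)·|𝔼_p[x] − 𝔼_q[x]| − (2/x̄²)·max(𝔼_p[x²], 𝔼_q[x²])`. -/
theorem l1_ge_first_moment_truncated (p q : ℝ → ℝ)
    (hp0 : ∀ x, 0 ≤ p x) (hq0 : ∀ x, 0 ≤ q x)
    (hpi : Integrable p) (hqi : Integrable q)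
    (hp1 : ∫ x, p x = 1) (hq1 : ∫ x, q x = 1)
    (hpm : Integrable (fun x => p x * x)) (hqm : Integrable (fun x => q x * x))
    (hp2 : Integrable (fun x => p x * x ^ 2))
    (hq2 : Integrable (fun x => q x * x ^ 2)) :
    ∀ xb : ℝ, 0 < xb →
      (1 / xb) * |(∫ x, p x * x) - ∫ x, q x * x| -
          (2 / xb ^ 2) * max (∫ x, p x * x ^ 2) (∫ x, q x * x ^ 2) ≤
        ∫ x, |p x - q x| := by
  intro xb hxb
  set L := ∫ x, |p x - q x| with hL
  set A := ∫ x, p x * x with hA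
  set B := ∫ x, q x * x with hB
  set Mp := ∫ x, p x * x ^ 2 with hMp
  set Mq := ∫ x, q x * x ^ 2 with hMq
  set M := max Mp Mq with hM
  have habs : Integrable (fun x => |p x - q x|) := (hpi.sub hqi).abs
  have hpf := trunc_integrable xb p hpi hpm
  have hqf := trunc_integrable xb q hqi hqm
  set Tp := ∫ x, p x * (if |x| ≤ xb then x else 0) with hTp
  set Tq := ∫ x, q x * (if |x| ≤ xb then x else 0) with hTq
  have h1 : |A - Tp| ≤ Mp / xb := tail_bound xb hxb p hp0 hpi hpm hp2
  have h2 : |B - Tq| ≤ Mq / xb := tail_bound xb hxb q hq0 hqi hqm hq2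
  have h3 : |Tp - Tq| ≤ xb * L := by
    rw [hTp, hTq, ← integral_sub hpf hqf]
    calc |∫ x, (p x * (if |x| ≤ xb then x else 0) - q x * (if |x| ≤ xb then x else 0))|
        ≤ ∫ x, |p x * (if |x| ≤ xb then x else 0) - q x * (if |x| ≤ xb then x else 0)| := by
          simpa using norm_integral_le_integral_norm
            (fun x => p x * (if |x| ≤ xb then x else 0) - q x * (if |x| ≤ xb then x else 0))
      _ ≤ ∫ x, xb * |p x - q x| := by
          refine integral_mono (hpf.sub hqf).abs (habs.const_mul xb) (fun x => ?_)
          rw [← sub_mul, abs_mul, mul_comm xb]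
          refine mul_le_mul_of_nonneg_left ?_ (abs_nonneg _)
          split_ifs with h
          · exact h
          · simpa using hxb.le
      _ = xb * L := integral_const_mul xb _
  have key : |A - B| ≤ xb * L + Mp / xb + Mq / xb := by
    calc |A - B| = |(A - Tp) + (Tp - Tq) + (Tq - B)| := by ring_nf
      _ ≤ |A - Tp| + |Tp - Tq| + |Tq - B| := by
          exact (abs_add_le _ _).trans (by gcongr; exact abs_add_le _ _)
      _ ≤ Mp / xb + xb * L + Mq / xb := by
          rw [abs_sub_comm Tq B]; exact add_le_add (add_le_add h1 h3) h2
      _ = xb * L + Mp / xb + Mq / xb := by ring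
  have hMp' : Mp / xb ≤ M / xb := by gcongr; exact le_max_left _ _
  have hMq' : Mq / xb ≤ M / xb := by gcongr; exact le_max_right _ _
  have final : (1 / xb) * |A - B| ≤ L + (2 / xb ^ 2) * M := by
    rw [div_mul_eq_mul_div, one_mul, div_le_iff₀ hxb]
    have expand : (L + 2 / xb ^ 2 * M) * xb = xb * L + (M / xb + M / xb) := by
      field_simp; ring
    rw [expand]
    calc |A - B| ≤ xb * L + Mp / xb + Mq / xb := key
      _ ≤ xb * L + (M / xb + M / xb) := by linarith
  linarith
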